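/- arXiv:2207.06725 — 3 statements merged into one kernel-verified Lean document; each statement's English description precedes it below -/
import Mathlib

section
/- Let A be an invertible m×m real matrix (IsUnit A.det), let b ∈ ℝ^m, and let d₁,…,d_m ∈ ℝ^d. For each n ∈ ℝ^d consider the (m+1)×(m+1) block matrix M(n) = fromBlocks A b r(n) 0, where r(n) is the row vector with entries r(n)_j = ⟪d_j, n⟫. Then for every n, det(M(n)) = −det(A) · ⟪ Σ_{j=1}^{m} (A⁻¹ *ᵥ b)_j • d_j , n ⟫. In particular the optimal direction v representing det(M(n)) = ⟪v,n⟫ is v = −det(A) Σ_j ψ̄_j d_j, where ψ̄ = A⁻¹ b are the values of the cardinal functions of the interior-node interpolation at the boundary node. -/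
open scoped Matrix RealInnerProductSpace

/-- Explicit formula for the optimal direction: for the bordered matrix `M n`
whose last row has entries `⟪d j, n⟫`, one has
`det (M n) = - det A * ⟪∑ j, (A⁻¹ b) j • d j, n⟫`. -/
theorem stmt_4 (d m : ℕ) (A : Matrix (Fin m) (Fin m) ℝ) (hA : IsUnit A.det)
    (b : Fin m → ℝ) (dv : Fin m → EuclideanSpace ℝ (Fin d)) :
    ∀ n : EuclideanSpace ℝ (Fin d),
      (Matrix.fromBlocks A (Matrix.of fun i (_ : Fin 1) => b i)
          (Matrix.of fun (_ : Fin 1) j => ⟪dv j, n⟫)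
          (0 : Matrix (Fin 1) (Fin 1) ℝ)).det =
        -A.det * ⟪∑ j : Fin m, (A⁻¹ *ᵥ b) j • dv j, n⟫ := by
  intro n
  haveI : Invertible A := A.invertibleOfIsUnitDet hA
  rw [Matrix.det_fromBlocks₁₁, Matrix.det_fin_one]
  simp only [Matrix.sub_apply, Matrix.zero_apply, zero_sub, Matrix.mul_apply,
    Matrix.of_apply, Matrix.mulVec, dotProduct, Matrix.invOf_eq_nonsing_inv]
  rw [sum_inner]
  simp only [inner_smul_left, RCLike.conj_to_real, Finset.mul_sum, Finset.sum_mul,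
    mul_neg, neg_mul, ← Finset.sum_neg_distrib]
  rw [Finset.sum_comm]
  refine Finset.sum_congr rfl fun j _ => Finset.sum_congr rfl fun k _ => by ring
end

section
/- Let Φ : ℝ → ℝ have derivative 0 at 0 (HasDerivAt Φ 0 0), and let c ∈ ℝ^d. Then the radial function x ↦ Φ(‖x − c‖) is Fréchet differentiable at its center c with derivative equal to the zero linear map. -/
/-- If `Φ'(0) = 0` then the radial function `x ↦ Φ ‖x - c‖` is Fréchet
differentiable at its center `c` with derivative the zero linear map. -/
theorem stmt_7 (d : ℕ) (Φ : ℝ → ℝ) (hΦ : HasDerivAt Φ 0 0)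
    (c : EuclideanSpace ℝ (Fin d)) :
    HasFDerivAt (fun x : EuclideanSpace ℝ (Fin d) => Φ ‖x - c‖)
      (0 : EuclideanSpace ℝ (Fin d) →L[ℝ] ℝ) c := by
  rw [HasFDerivAt, hasFDerivAtFilter_iff_isLittleO]
  have h1 : (fun t : ℝ => Φ t - Φ 0) =o[nhds 0] fun t => t := by
    have := hasDerivAt_iff_isLittleO.mp hΦ
    simpa using this
  have htend : Filter.Tendsto (fun x : EuclideanSpace ℝ (Fin d) => ‖x - c‖)
      (nhds c) (nhds 0) := by
    have h : Filter.Tendsto (fun x : EuclideanSpace ℝ (Fin d) => x - c) (nhds c)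
        (nhds (c - c)) := (continuous_id.sub continuous_const).tendsto c
    rw [sub_self] at h
    simpa using h.norm
  have h2 := h1.comp_tendsto htend
  have h3 : (fun x : EuclideanSpace ℝ (Fin d) => ‖x - c‖) =O[nhds c]
      fun x => x - c := by
    apply Asymptotics.isBigO_of_le
    intro x
    simp
  have := h2.trans_isBigO h3
  simpa [Function.comp_def] using this
end

section
/- Let K ⊆ ℝ^d be a set, let x₁,…,x_m ∈ K be nodes with the first m_I internal and the last m_B = m − m_I boundary, let n_k ∈ ℝ^d with ‖n_k‖ = 1 be unit normals at the boundary nodes, and let ψ₁,…,ψ_m : ℝ^d → ℝ be cardinal functions. For any function w differentiable at each boundary node define T w (y) = Σ_{i=1}^{m_I} w(x_i)·ψ_i(y) + Σ_{k=m_I+1}^{m} (fderiv ℝ w x_k)(n_k)·ψ_k(y). Let u, u* : ℝ^d → ℝ be differentiable at each boundary node and suppose: T u* (y) = u*(y) for all y ∈ K (the approximant u* is reproduced by the interpolation); |u(z) − u*(z)| ≤ E and ‖fderiv ℝ u z − fderiv ℝ u* z‖ ≤ C for all z ∈ K; Σ_{i=1}^{m_I} |ψ_i(z)| ≤ Λ_I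 and Σ_{k=m_I+1}^{m} |ψ_k(z)| ≤ Λ_B for all z ∈ K. Then |u(y) − T u (y)| ≤ (1 + Λ_I)·E + Λ_B·C for every y ∈ K. -/
open Finset

/-- The RBF interpolation operator with Neumann data: values of `w` at the
internal nodes (indices `< m_I`) and normal derivatives of `w` at the boundary
nodes (indices `≥ m_I`), combined through the cardinal functions `ψ`. -/
noncomputable def interpOp (d m mI : ℕ) (x : Fin m → EuclideanSpace ℝ (Fin d))
    (nrm : Fin m → EuclideanSpace ℝ (Fin d))
    (ψ : Fin m → EuclideanSpace ℝ (Fin d) → ℝ)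
    (w : EuclideanSpace ℝ (Fin d) → ℝ) (y : EuclideanSpace ℝ (Fin d)) : ℝ :=
  (∑ i ∈ univ.filter (fun i : Fin m => (i : ℕ) < mI), w (x i) * ψ i y) +
    ∑ k ∈ univ.filter (fun k : Fin m => mI ≤ (k : ℕ)),
      (fderiv ℝ w (x k)) (nrm k) * ψ k y

/-- Interpolation error estimate via the Lebesgue constants: if the best
approximation `u*` is reproduced by the interpolation operator `T`, then
`|u - T u| ≤ (1 + Λ_I) ‖u - u*‖_∞ + Λ_B C_∞(u - u*)` on `K`. -/
theorem stmt_16 (d m mI : ℕ) (hmI : mI ≤ m)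
    (K : Set (EuclideanSpace ℝ (Fin d)))
    (x : Fin m → EuclideanSpace ℝ (Fin d)) (hx : ∀ i, x i ∈ K)
    (nrm : Fin m → EuclideanSpace ℝ (Fin d))
    (hnrm : ∀ k : Fin m, mI ≤ (k : ℕ) → ‖nrm k‖ = 1)
    (ψ : Fin m → EuclideanSpace ℝ (Fin d) → ℝ)
    (u ustar : EuclideanSpace ℝ (Fin d) → ℝ)
    (hdiffu : ∀ k : Fin m, mI ≤ (k : ℕ) → DifferentiableAt ℝ u (x k))
    (hdiffustar : ∀ k : Fin m, mI ≤ (k : ℕ) → DifferentiableAt ℝ ustar (x k))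
    (hrep : ∀ y ∈ K, interpOp d m mI x nrm ψ ustar y = ustar y)
    (E C ΛI ΛB : ℝ)
    (hE : ∀ z ∈ K, |u z - ustar z| ≤ E)
    (hC : ∀ z ∈ K, ‖fderiv ℝ u z - fderiv ℝ ustar z‖ ≤ C)
    (hΛI : ∀ z ∈ K, ∑ i ∈ univ.filter (fun i : Fin m => (i : ℕ) < mI), |ψ i z| ≤ ΛI)
    (hΛB : ∀ z ∈ K, ∑ k ∈ univ.filter (fun k : Fin m => mI ≤ (k : ℕ)), |ψ k z| ≤ ΛB) :
    ∀ y ∈ K, |u y - interpOp d m mI x nrm ψ u y| ≤ (1 + ΛI) * E + ΛB * C := by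

  intro y hy
  have hE0 : 0 ≤ E := le_trans (abs_nonneg _) (hE y hy)
  have hC0 : 0 ≤ C := le_trans (norm_nonneg _) (hC y hy)
  have key : |ustar y - interpOp d m mI x nrm ψ u y| ≤ ΛI * E + ΛB * C := by
    rw [← hrep y hy]
    unfold interpOp
    rw [add_sub_add_comm, ← Finset.sum_sub_distrib, ← Finset.sum_sub_distrib]
    refine le_trans (abs_add_le _ _) (add_le_add ?_ ?_)
    · calc |∑ i ∈ univ.filter (fun i : Fin m => (i : ℕ) < mI),
          (ustar (x i) * ψ i y - u (x i) * ψ i y)|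
          ≤ ∑ i ∈ univ.filter (fun i : Fin m => (i : ℕ) < mI),
            |ustar (x i) * ψ i y - u (x i) * ψ i y| := Finset.abs_sum_le_sum_abs _ _
        _ ≤ ∑ i ∈ univ.filter (fun i : Fin m => (i : ℕ) < mI), E * |ψ i y| := by
            refine Finset.sum_le_sum fun i _ => ?_
            rw [← sub_mul, abs_mul]
            exact mul_le_mul_of_nonneg_right
              (by rw [abs_sub_comm]; exact hE (x i) (hx i)) (abs_nonneg _)
        _ = E * ∑ i ∈ univ.filter (fun i : Fin m => (i : ℕ) < mI), |ψ i y| := by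
            rw [Finset.mul_sum]
        _ ≤ E * ΛI := mul_le_mul_of_nonneg_left (hΛI y hy) hE0
        _ = ΛI * E := mul_comm _ _
    · calc |∑ k ∈ univ.filter (fun k : Fin m => mI ≤ (k : ℕ)),
          ((fderiv ℝ ustar (x k)) (nrm k) * ψ k y - (fderiv ℝ u (x k)) (nrm k) * ψ k y)|
          ≤ ∑ k ∈ univ.filter (fun k : Fin m => mI ≤ (k : ℕ)),
            |(fderiv ℝ ustar (x k)) (nrm k) * ψ k y - (fderiv ℝ u (x k)) (nrm k) * ψ k y| :=
            Finset.abs_sum_le_sum_abs _ _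
        _ ≤ ∑ k ∈ univ.filter (fun k : Fin m => mI ≤ (k : ℕ)), C * |ψ k y| := by
            refine Finset.sum_le_sum fun k hk => ?_
            rw [Finset.mem_filter] at hk
            rw [← sub_mul, abs_mul]
            refine mul_le_mul_of_nonneg_right ?_ (abs_nonneg _)
            have : (fderiv ℝ ustar (x k)) (nrm k) - (fderiv ℝ u (x k)) (nrm k)
                = (fderiv ℝ ustar (x k) - fderiv ℝ u (x k)) (nrm k) := by
              simp
            rw [this]
            calc |(fderiv ℝ ustar (x k) - fderiv ℝ u (x k)) (nrm k)|
                ≤ ‖fderiv ℝ ustar (x k) - fderiv ℝ u (x k)‖ * ‖nrm k‖ :=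
                  (fderiv ℝ ustar (x k) - fderiv ℝ u (x k)).le_opNorm _
              _ = ‖fderiv ℝ u (x k) - fderiv ℝ ustar (x k)‖ := by
                  rw [hnrm k hk.2, mul_one, norm_sub_rev]
              _ ≤ C := hC (x k) (hx k)
        _ = C * ∑ k ∈ univ.filter (fun k : Fin m => mI ≤ (k : ℕ)), |ψ k y| := by
            rw [Finset.mul_sum]
        _ ≤ C * ΛB := mul_le_mul_of_nonneg_left (hΛB y hy) hC0
        _ = ΛB * C := mul_comm _ _
  calc |u y - interpOp d m mI x nrm ψ u y|
      ≤ |u y - ustar y| + |ustar y - interpOp d m mI x nrm ψ u y| := by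
        have := abs_sub_abs_le_abs_sub (u y) (ustar y)
        calc |u y - interpOp d m mI x nrm ψ u y|
            = |(u y - ustar y) + (ustar y - interpOp d m mI x nrm ψ u y)| := by ring_nf
          _ ≤ _ := abs_add_le _ _
    _ ≤ E + (ΛI * E + ΛB * C) := add_le_add (hE y hy) key
    _ = (1 + ΛI) * E + ΛB * C := by ring
end
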